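/- Let V ∈ L^∞(ℝ^N) with V(x) → V^∞ > 0, p ∈ (2, 2*), λ₁ = inf_M J, and suppose λ₁ ≤ 0 is attained at some w₁ > 0 solving -Δw₁ + V w₁ = λ₁ w₁^{p-1}. If u ∈ M solves -Δu + V u = λ|u|^{p-2}u with λ > 0 ≥ λ₁ or λ ≥ 0 > λ₁, then u is nodal (both u⁺ ≠ 0 and u⁻ ≠ 0). -/

import Mathlib

open MeasureTheory Real Filter
open scoped RealInnerProductSpace

noncomputable section

variable {N : ℕ}

/-- The energy functional `J(u) = ∫ |∇u|² + V u²`. -/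
def Jfun (V : EuclideanSpace ℝ (Fin N) → ℝ) (u : EuclideanSpace ℝ (Fin N) → ℝ) : ℝ :=
  ∫ x, (‖fderiv ℝ u x‖ ^ 2 + V x * u x ^ 2)

/-- Membership in `H¹(ℝ^N)`. -/
def H1mem (u : EuclideanSpace ℝ (Fin N) → ℝ) : Prop :=
  MemLp u 2 volume ∧ MemLp (fun x => ‖fderiv ℝ u x‖) 2 volume

/-- The constraint manifold `M = {u ∈ H¹ : ∫ |u|^p = 1}`. -/
def Mset (N : ℕ) (p : ℝ) : Set (EuclideanSpace ℝ (Fin N) → ℝ) :=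
  {u | H1mem u ∧ (∫ x, |u x| ^ p) = 1}

/-- The square of the `H¹`-distance between two functions. -/
def H1dist (u v : EuclideanSpace ℝ (Fin N) → ℝ) : ℝ :=
  ∫ x, (‖fderiv ℝ u x - fderiv ℝ v x‖ ^ 2 + (u x - v x) ^ 2)

/-- The first minimax level `λ₁ = inf_M J`. -/
def lam1 (N : ℕ) (p : ℝ) (V : EuclideanSpace ℝ (Fin N) → ℝ) : ℝ :=
  sInf (Jfun V '' Mset N p)

/-- The class `Γ₂` of odd `H¹`-continuous maps from `S¹` to `M`
(parametrized by `θ ∈ ℝ`; oddness is antiperiodicity by `π`). -/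
def Gamma2 (N : ℕ) (p : ℝ) : Set (ℝ → EuclideanSpace ℝ (Fin N) → ℝ) :=
  {γ | (∀ θ, γ θ ∈ Mset N p) ∧ (∀ θ, γ (θ + π) = -γ θ) ∧
    ∀ θ₀ : ℝ, Tendsto (fun θ => H1dist (γ θ) (γ θ₀)) (nhds θ₀) (nhds 0)}

/-- The second minimax level `λ₂ = inf_{γ ∈ Γ₂} max_{u ∈ γ(S¹)} J(u)`. -/
def lam2 (N : ℕ) (p : ℝ) (V : EuclideanSpace ℝ (Fin N) → ℝ) : ℝ :=
  sInf {c | ∃ γ ∈ Gamma2 N p,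
    c = sSup ((fun θ => Jfun V (γ θ)) '' Set.Icc 0 (2 * π))}

/-- `p` is an admissible (subcritical) exponent: `p ∈ (2, 2*)`. -/
def pAdm (N : ℕ) (p : ℝ) : Prop :=
  2 < p ∧ ((N : ℝ) = 2 ∨ (3 ≤ N ∧ p < 2 * N / ((N : ℝ) - 2)))

/-- `u` is a weak solution of `-Δu + V u = λ |u|^{p-2} u`. -/
def WeakSol (V : EuclideanSpace ℝ (Fin N) → ℝ) (lam p : ℝ)
    (u : EuclideanSpace ℝ (Fin N) → ℝ) : Prop :=
  ∀ φ : EuclideanSpace ℝ (Fin N) → ℝ, H1mem φ →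
    (∫ x, (⟪gradient u x, gradient φ x⟫ + V x * u x * φ x)) =
      lam * ∫ x, |u x| ^ (p - 2) * u x * φ x



/-- Pointwise Young-type bound. -/
lemma my_ptwise_bound {p a b : ℝ} (hp : 2 < p) (ha : 0 ≤ a) (hb : 0 ≤ b) :
    a ^ (p - 2) * a * b ≤ a ^ p + b ^ p := by
  rcases eq_or_lt_of_le ha with h0 | ha0
  · rw [← h0]
    have : (0:ℝ) ^ (p - 2) = 0 := Real.zero_rpow (by linarith)
    simp [this]
    positivity
  · have key : a ^ (p - 2) * a = a ^ (p - 1) := by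
      rw [show p - 1 = p - 2 + 1 by ring, Real.rpow_add_one (ne_of_gt ha0)]
    rw [key]
    rcases le_total a b with hab | hab
    · have h1 : a ^ (p - 1) ≤ b ^ (p - 1) := Real.rpow_le_rpow ha hab (by linarith)
      have h2 : a ^ (p - 1) * b ≤ b ^ (p - 1) * b :=
        mul_le_mul_of_nonneg_right h1 hb
      have h3 : b ^ (p - 1) * b = b ^ p := by
        rw [← Real.rpow_add_one' hb (by linarith)]; norm_num
      nlinarith [Real.rpow_nonneg ha p]
    · have h2 : a ^ (p - 1) * b ≤ a ^ (p - 1) * a :=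
        mul_le_mul_of_nonneg_left hab (Real.rpow_nonneg ha _)
      have h3 : a ^ (p - 1) * a = a ^ p := by
        rw [← Real.rpow_add_one (ne_of_gt ha0)]; norm_num
      nlinarith [Real.rpow_nonneg hb p]

/-- Integrability of the Hölder-type product. -/
lemma my_integrable_prod {α : Type*} [MeasurableSpace α] {μ : Measure α}
    {p : ℝ} (hp : 2 < p) {u w : α → ℝ}
    (hu : AEStronglyMeasurable u μ) (hw : AEStronglyMeasurable w μ)
    (hui : Integrable (fun x => |u x| ^ p) μ)
    (hwi : Integrable (fun x => |w x| ^ p) μ) :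
    Integrable (fun x => |u x| ^ (p - 2) * u x * w x) μ := by
  have hcont : Continuous (fun t : ℝ => |t| ^ (p - 2) * t) :=
    ((Real.continuous_rpow_const (by linarith)).comp continuous_abs).mul continuous_id
  have hmeas : AEStronglyMeasurable (fun x => |u x| ^ (p - 2) * u x * w x) μ :=
    (hcont.comp_aestronglyMeasurable hu).mul hw
  refine (hui.add hwi).mono' hmeas (Filter.Eventually.of_forall fun x => ?_)
  have h1 : ‖|u x| ^ (p - 2) * u x * w x‖ = |u x| ^ (p - 2) * |u x| * |w x| := by
    rw [Real.norm_eq_abs, abs_mul, abs_mul,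
      abs_of_nonneg (Real.rpow_nonneg (abs_nonneg _) _)]
  rw [h1]
  exact my_ptwise_bound hp (abs_nonneg _) (abs_nonneg _)


/-- If `∫ c·f = 0` with `c > 0` wherever `f ≠ 0` and `f` of constant sign, then `f = 0` a.e. -/
lemma my_key {α : Type*} [MeasurableSpace α] {μ : Measure α} {c f : α → ℝ}
    (hc : ∀ x, f x ≠ 0 → 0 < c x)
    (hint : Integrable (fun x => c x * f x) μ)
    (h0 : (∫ x, c x * f x ∂μ) = 0)
    (hsgn : (∀ x, 0 ≤ f x) ∨ (∀ x, f x ≤ 0)) :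
    f =ᵐ[μ] 0 := by
  have hae : ∀ᵐ x ∂μ, c x * f x = 0 := by
    rcases hsgn with hs | hs
    · have hnn : ∀ x, 0 ≤ c x * f x := fun x => by
        rcases eq_or_ne (f x) 0 with h | h
        · simp [h]
        · exact mul_nonneg (hc x h).le (hs x)
      have h := (integral_eq_zero_iff_of_nonneg hnn hint).mp h0
      filter_upwards [h] with x hx using hx
    · have hnn : ∀ x, 0 ≤ -(c x * f x) := fun x => by
        rcases eq_or_ne (f x) 0 with h | h
        · simp [h]
        · have := mul_nonpos_of_nonneg_of_nonpos (hc x h).le (hs x); linarith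
      have h0' : (∫ x, -(c x * f x) ∂μ) = 0 := by rw [integral_neg, h0, neg_zero]
      have h := (integral_eq_zero_iff_of_nonneg hnn hint.neg).mp h0'
      filter_upwards [h] with x hx
      have hx' : -(c x * f x) = 0 := hx
      linarith
  filter_upwards [hae] with x hx
  by_contra hfx
  have hfx' : f x ≠ 0 := hfx
  exact mul_ne_zero (ne_of_gt (hc x hfx')) hfx' hx

/-- if `λ₁ ≤ 0` is attained at a positive ground state `w₁` and
`u ∈ M` solves the equation with `λ > 0 ≥ λ₁` or `λ ≥ 0 > λ₁`, then `u` is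
nodal. -/
theorem stmt17 (N : ℕ) (hN : 2 ≤ N) (p Vinf lam : ℝ) (hp : pAdm N p) (hVinf : 0 < Vinf)
    (V : EuclideanSpace ℝ (Fin N) → ℝ) (hV : MemLp V ⊤ volume)
    (hVlim : Tendsto V (Filter.cocompact _) (nhds Vinf))
    (w₁ : EuclideanSpace ℝ (Fin N) → ℝ) (hw₁M : w₁ ∈ Mset N p)
    (hw₁pos : ∀ x, 0 < w₁ x)
    (hw₁min : Jfun V w₁ = lam1 N p V)
    (hw₁sol : WeakSol V (lam1 N p V) p w₁)
    (u : EuclideanSpace ℝ (Fin N) → ℝ) (huM : u ∈ Mset N p)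
    (husol : WeakSol V lam p u)
    (hsign : (0 < lam ∧ lam1 N p V ≤ 0) ∨ (0 ≤ lam ∧ lam1 N p V < 0)) :
    (∃ x, 0 < u x) ∧ (∃ x, u x < 0) := by
  have hp2 : 2 < p := hp.1
  have husm : AEStronglyMeasurable u volume := huM.1.1.aestronglyMeasurable
  have hwsm : AEStronglyMeasurable w₁ volume := hw₁M.1.1.aestronglyMeasurable
  have hunorm : (∫ x, |u x| ^ p) = 1 := huM.2
  have hwnorm : (∫ x, |w₁ x| ^ p) = 1 := hw₁M.2
  have hui : Integrable (fun x => |u x| ^ p) volume := by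
    by_contra h; rw [integral_undef h] at hunorm; norm_num at hunorm
  have hwi : Integrable (fun x => |w₁ x| ^ p) volume := by
    by_contra h; rw [integral_undef h] at hwnorm; norm_num at hwnorm
  have hIint : Integrable (fun x => |u x| ^ (p - 2) * u x * w₁ x) volume :=
    my_integrable_prod hp2 husm hwsm hui hwi
  have hKint : Integrable (fun x => |w₁ x| ^ (p - 2) * w₁ x * u x) volume :=
    my_integrable_prod hp2 hwsm husm hwi hui
  have eq1 := husol w₁ hw₁M.1
  have eq2 := hw₁sol u huM.1
  have hLHS : (∫ x, (⟪gradient u x, gradient w₁ x⟫ + V x * u x * w₁ x))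
      = ∫ x, (⟪gradient w₁ x, gradient u x⟫ + V x * w₁ x * u x) := by
    congr 1; funext x; rw [real_inner_comm]; ring
  have main : lam * (∫ x, |u x| ^ (p - 2) * u x * w₁ x)
      = lam1 N p V * ∫ x, |w₁ x| ^ (p - 2) * w₁ x * u x := by
    rw [← eq1, ← eq2, hLHS]
  by_contra hcon
  push_neg at hcon
  have hsgnu : (∀ x, 0 ≤ u x) ∨ (∀ x, u x ≤ 0) := by
    by_cases hA : ∃ x, 0 < u x
    · exact Or.inl (hcon hA)
    · push_neg at hA
      exact Or.inr hA
  have hI0orK0 : (∫ x, |u x| ^ (p - 2) * u x * w₁ x) = 0 ∨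
      (∫ x, |w₁ x| ^ (p - 2) * w₁ x * u x) = 0 := by
    rcases hsgnu with hs | hs
    · have hI : 0 ≤ ∫ x, |u x| ^ (p - 2) * u x * w₁ x :=
        integral_nonneg fun x => mul_nonneg
          (mul_nonneg (Real.rpow_nonneg (abs_nonneg _) _) (hs x)) (hw₁pos x).le
      have hK : 0 ≤ ∫ x, |w₁ x| ^ (p - 2) * w₁ x * u x :=
        integral_nonneg fun x => mul_nonneg
          (mul_nonneg (Real.rpow_nonneg (abs_nonneg _) _) (hw₁pos x).le) (hs x)
      rcases hsign with ⟨hl, hl1⟩ | ⟨hl, hl1⟩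
      · left
        have h1 : lam1 N p V * (∫ x, |w₁ x| ^ (p - 2) * w₁ x * u x) ≤ 0 :=
          mul_nonpos_of_nonpos_of_nonneg hl1 hK
        have h2 : (∫ x, |u x| ^ (p - 2) * u x * w₁ x) ≤ 0 := by nlinarith
        exact le_antisymm h2 hI
      · right
        have h1 : lam1 N p V * (∫ x, |w₁ x| ^ (p - 2) * w₁ x * u x) = 0 := by
          have ha : lam1 N p V * (∫ x, |w₁ x| ^ (p - 2) * w₁ x * u x) ≤ 0 :=
            mul_nonpos_of_nonpos_of_nonneg hl1.le hK
          have hb : 0 ≤ lam1 N p V * (∫ x, |w₁ x| ^ (p - 2) * w₁ x * u x) := by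
            rw [← main]; exact mul_nonneg hl hI
          linarith
        exact (mul_eq_zero.mp h1).resolve_left (ne_of_lt hl1)
    · have hI : (∫ x, |u x| ^ (p - 2) * u x * w₁ x) ≤ 0 :=
        integral_nonpos fun x => mul_nonpos_of_nonpos_of_nonneg
          (mul_nonpos_of_nonneg_of_nonpos (Real.rpow_nonneg (abs_nonneg _) _) (hs x))
          (hw₁pos x).le
      have hK : (∫ x, |w₁ x| ^ (p - 2) * w₁ x * u x) ≤ 0 :=
        integral_nonpos fun x => mul_nonpos_of_nonneg_of_nonpos
          (mul_nonneg (Real.rpow_nonneg (abs_nonneg _) _) (hw₁pos x).le) (hs x)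
      rcases hsign with ⟨hl, hl1⟩ | ⟨hl, hl1⟩
      · left
        have h1 : 0 ≤ lam1 N p V * (∫ x, |w₁ x| ^ (p - 2) * w₁ x * u x) :=
          mul_nonneg_of_nonpos_of_nonpos hl1 hK
        have h2 : 0 ≤ (∫ x, |u x| ^ (p - 2) * u x * w₁ x) := by nlinarith
        exact le_antisymm hI h2
      · right
        have h1 : lam1 N p V * (∫ x, |w₁ x| ^ (p - 2) * w₁ x * u x) = 0 := by
          have ha : 0 ≤ lam1 N p V * (∫ x, |w₁ x| ^ (p - 2) * w₁ x * u x) :=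
            mul_nonneg_of_nonpos_of_nonpos hl1.le hK
          have hb : lam1 N p V * (∫ x, |w₁ x| ^ (p - 2) * w₁ x * u x) ≤ 0 := by
            rw [← main]; exact mul_nonpos_of_nonneg_of_nonpos hl hI
          linarith
        exact (mul_eq_zero.mp h1).resolve_left (ne_of_lt hl1)
  have huzero : u =ᵐ[volume] 0 := by
    rcases hI0orK0 with h0 | h0
    · have hre : (fun x : EuclideanSpace ℝ (Fin N) => |u x| ^ (p - 2) * u x * w₁ x)
          = fun x => (|u x| ^ (p - 2) * w₁ x) * u x := funext fun x => by ring
      refine my_key (c := fun x => |u x| ^ (p - 2) * w₁ x) (f := u)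
        (fun x hx => mul_pos (Real.rpow_pos_of_pos (abs_pos.mpr hx) _) (hw₁pos x))
        ?_ ?_ hsgnu
      · rw [← hre]; exact hIint
      · rw [← hre]; exact h0
    · exact my_key (c := fun x => |w₁ x| ^ (p - 2) * w₁ x) (f := u)
        (fun x _ => mul_pos (Real.rpow_pos_of_pos (abs_pos.mpr (hw₁pos x).ne') _) (hw₁pos x))
        hKint h0 hsgnu
  have hfinal : (1 : ℝ) = 0 := by
    rw [← hunorm]
    have hz : (fun x => |u x| ^ p) =ᵐ[volume] (fun _ => (0 : ℝ)) := by
      filter_upwards [huzero] with x hx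
      simp only [Pi.zero_apply] at hx
      rw [hx, abs_zero, Real.zero_rpow (by positivity : p ≠ 0)]
    rw [integral_congr_ae hz, integral_zero]
  norm_num at hfinal
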